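/- Let H ≥ 1 be an integer, let X_1, …, X_H be independent random variables uniformly distributed on the unit circle {z ∈ ℂ : |z| = 1}, and set Z_H = X_1 + ⋯ + X_H. Then for all non-negative integers r and s, E[(Re Z_H)^{2r} (Im Z_H)^{2s}] ≤ (r+s)! · H^{r+s}. -/

import Mathlib

open MeasureTheory ProbabilityTheory Complex Finset

/-- The uniform probability measure on the unit circle `{z ∈ ℂ : |z| = 1}`. -/
noncomputable def uniformCircle : Measure ℂ :=
  Measure.map (fun t : ℝ => Complex.exp (2 * Real.pi * t * Complex.I))
    (volume.restrict (Set.Icc 0 1))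

lemma phi_measurable : Measurable (fun t : ℝ => Complex.exp (2 * Real.pi * t * Complex.I)) := by
  fun_prop


instance : IsProbabilityMeasure uniformCircle := by
  have : IsProbabilityMeasure (volume.restrict (Set.Icc (0:ℝ) 1)) := by
    constructor
    simp [Real.volume_Icc]
  exact Measure.isProbabilityMeasure_map phi_measurable.aemeasurable

lemma uniformCircle_abs_ae : ∀ᵐ z ∂uniformCircle, ‖z‖ = 1 := by
  have hset : MeasurableSet {z : ℂ | ‖z‖ = 1} :=
    (continuous_norm.measurable (measurableSet_singleton 1))
  rw [ae_iff]
  have hc : {a : ℂ | ¬ ‖a‖ = 1} = {z : ℂ | ‖z‖ = 1}ᶜ := rfl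
  rw [hc, uniformCircle, Measure.map_apply phi_measurable hset.compl]
  have h0 : ((fun t : ℝ => Complex.exp (2 * Real.pi * t * Complex.I)) ⁻¹'
      {z : ℂ | ‖z‖ = 1}ᶜ) = ∅ := by
    ext t; simp [Complex.norm_exp]
  rw [h0]; simp

lemma uniformCircle_moment (a b : ℕ) :
    ∫ z, z ^ a * (starRingEnd ℂ) z ^ b ∂uniformCircle = if a = b then 1 else 0 := by
  have hms : Measurable (fun z : ℂ => (starRingEnd ℂ) z) := continuous_star.measurable
  have hm : Measurable fun z : ℂ => z ^ a * (starRingEnd ℂ) z ^ b :=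
    (measurable_id.pow_const a).mul (hms.pow_const b)
  rw [uniformCircle, integral_map phi_measurable.aemeasurable hm.aestronglyMeasurable]
  have hint : ∀ t : ℝ, Complex.exp (2 * Real.pi * t * Complex.I) ^ a *
      (starRingEnd ℂ) (Complex.exp (2 * Real.pi * t * Complex.I)) ^ b
      = Complex.exp ((((a:ℂ) - b) * (2 * Real.pi * Complex.I)) * t) := by
    intro t
    rw [← Complex.exp_conj, ← Complex.exp_nat_mul, ← Complex.exp_nat_mul, ← Complex.exp_add]
    congr 1
    have hconj : (starRingEnd ℂ) (2 * Real.pi * t * Complex.I)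
        = -(2 * Real.pi * t * Complex.I) := by
      simp only [map_mul, Complex.conj_I, Complex.conj_ofReal, map_ofNat]
      ring
    rw [hconj]
    ring
  simp_rw [hint]
  rw [MeasureTheory.integral_Icc_eq_integral_Ioc, ← intervalIntegral.integral_of_le zero_le_one]
  by_cases hab : a = b
  · subst hab
    simp
  · rw [integral_exp_mul_complex (c := ((a:ℂ) - b) * (2 * Real.pi * Complex.I))
      (mul_ne_zero (sub_ne_zero.mpr (by exact_mod_cast hab))
        (by simp [Real.pi_ne_zero, Complex.I_ne_zero]))]
    have hc1 : Complex.exp (((a:ℂ) - b) * (2 * Real.pi * Complex.I) * ((1:ℝ):ℂ)) = 1 := by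
      have h2 : ((a:ℂ) - b) = (((a:ℤ) - (b:ℤ) : ℤ) : ℂ) := by push_cast; ring
      rw [Complex.ofReal_one, mul_one, h2]
      exact_mod_cast Complex.exp_int_mul_two_pi_mul_I ((a:ℤ) - (b:ℤ))
    rw [hc1]
    simp [hab]

lemma integral_pi_prod {ι : Type*} [Fintype ι] (ν : Measure ℂ) [SigmaFinite ν] (f : ι → ℂ → ℂ) :
    ∫ x : ι → ℂ, ∏ i, f i (x i) ∂(Measure.pi fun _ => ν) = ∏ i, ∫ z, f i z ∂ν := by
  letI : MeasureSpace ℂ := ⟨ν⟩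
  exact MeasureTheory.integral_fintype_prod_eq_prod (fun i => f i)

section joint

variable {Ω : Type*} [MeasurableSpace Ω] (μ : Measure Ω) [IsProbabilityMeasure μ]
    {H : ℕ} (X : Fin H → Ω → ℂ)

lemma joint_law (hmeas : ∀ j, Measurable (X j))
    (hindep : iIndepFun X μ)
    (hunif : ∀ j, Measure.map (X j) μ = uniformCircle) :
    Measure.map (fun ω (l : Fin H) => X l ω) μ = Measure.pi (fun _ => uniformCircle) := by
  refine (Measure.pi_eq fun s hs => ?_).symm
  rw [Measure.map_apply (measurable_pi_lambda _ fun l => hmeas l) (MeasurableSet.univ_pi hs)]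
  have hpre : (fun ω (l : Fin H) => X l ω) ⁻¹' Set.pi Set.univ s = ⋂ l, X l ⁻¹' s l := by
    ext ω; simp [Set.mem_pi]
  rw [hpre, hindep.meas_iInter fun l => ⟨s l, hs l, rfl⟩]
  refine Finset.prod_congr rfl fun l _ => ?_
  rw [← Measure.map_apply (hmeas l) (hs l), hunif l]

lemma integral_prod_comp (hmeas : ∀ j, Measurable (X j))
    (hindep : iIndepFun X μ)
    (hunif : ∀ j, Measure.map (X j) μ = uniformCircle)
    (F : Fin H → ℂ → ℂ) (hF : ∀ l, Measurable (F l)) :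
    ∫ ω, ∏ l, F l (X l ω) ∂μ = ∏ l, ∫ z, F l z ∂uniformCircle := by
  have hjm : Measurable (fun ω (l : Fin H) => X l ω) :=
    measurable_pi_lambda _ fun l => hmeas l
  have hpm : Measurable (fun y : Fin H → ℂ => ∏ l, F l (y l)) :=
    Finset.measurable_prod _ fun l _ => (hF l).comp (measurable_pi_apply l)
  have := integral_map (μ := μ) hjm.aemeasurable
    (f := fun y : Fin H → ℂ => ∏ l, F l (y l)) hpm.aestronglyMeasurable
  rw [joint_law μ X hmeas hindep hunif] at this
  rw [← this, integral_pi_prod]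

end joint

lemma exists_comp_perm {m H : ℕ} (j k : Fin m → Fin H)
    (h : ∀ l, (univ.filter fun i => j i = l).card = (univ.filter fun i => k i = l).card) :
    ∃ σ : Equiv.Perm (Fin m), k = j ∘ σ := by
  have hcard : ∀ l : Fin H, Fintype.card {i // k i = l} = Fintype.card {i // j i = l} := by
    intro l
    rw [Fintype.card_subtype, Fintype.card_subtype]
    exact (h l).symm
  let e : ∀ l, {i // k i = l} ≃ {i // j i = l} := fun l => Fintype.equivOfCardEq (hcard l)
  let f : Fin m → Fin m := fun i => (e (k i) ⟨i, rfl⟩).1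
  have key : ∀ i, j (f i) = k i := fun i => (e (k i) ⟨i, rfl⟩).2
  have finj : Function.Injective f := by
    intro i i' hii
    have hk : k i = k i' := by rw [← key i, ← key i', hii]
    have aux : ∀ (l) (hl : k i' = l), (e l ⟨i', hl⟩).1 = f i' := by
      intro l hl
      subst hl
      rfl
    have h3 : (e (k i) ⟨i', hk.symm⟩).1 = f i := by rw [aux (k i) hk.symm, hii]
    have h4 : (⟨i, rfl⟩ : {x // k x = k i}) = ⟨i', hk.symm⟩ :=
      (e (k i)).injective (Subtype.ext h3.symm)
    exact congrArg Subtype.val h4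
  refine ⟨Equiv.ofBijective f (Finite.injective_iff_bijective.mp finj), ?_⟩
  funext i
  exact (key i).symm

lemma card_pairs_le (m H : ℕ) :
    ((univ : Finset ((Fin m → Fin H) × (Fin m → Fin H))).filter fun p =>
        ∀ l, (univ.filter fun i => p.1 i = l).card = (univ.filter fun i => p.2 i = l).card).card
      ≤ m.factorial * H ^ m := by
  classical
  have hle := Finset.card_le_card_of_injOn
    (s := (univ : Finset ((Fin m → Fin H) × (Fin m → Fin H))).filter fun p =>
      ∀ l, (univ.filter fun i => p.1 i = l).card = (univ.filter fun i => p.2 i = l).card)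
    (f := fun p : (Fin m → Fin H) × (Fin m → Fin H) =>
      (p.1, if h : ∃ σ : Equiv.Perm (Fin m), p.2 = p.1 ∘ σ then h.choose else 1))
    (t := (univ : Finset ((Fin m → Fin H) × Equiv.Perm (Fin m))))
    (fun p _ => mem_univ _) ?_
  · calc _ ≤ (univ : Finset ((Fin m → Fin H) × Equiv.Perm (Fin m))).card := hle
      _ = m.factorial * H ^ m := by
        rw [Finset.card_univ, Fintype.card_prod, Fintype.card_perm, Fintype.card_fun]
        rw [Fintype.card_fin, Fintype.card_fin, Nat.mul_comm]
  · intro p hp q hq hpq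
    have hep : ∃ σ : Equiv.Perm (Fin m), p.2 = p.1 ∘ σ :=
      exists_comp_perm p.1 p.2 (mem_filter.mp (Finset.mem_coe.mp hp)).2
    have heq : ∃ σ : Equiv.Perm (Fin m), q.2 = q.1 ∘ σ :=
      exists_comp_perm q.1 q.2 (mem_filter.mp (Finset.mem_coe.mp hq)).2
    simp only at hpq
    rw [dif_pos hep, dif_pos heq] at hpq
    have h1 : p.1 = q.1 := (Prod.mk.injEq _ _ _ _ ▸ hpq).1
    have h2 : hep.choose = heq.choose := (Prod.mk.injEq _ _ _ _ ▸ hpq).2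
    have := hep.choose_spec
    have := heq.choose_spec
    refine Prod.ext h1 ?_
    rw [hep.choose_spec, heq.choose_spec]
    exact congrArg₂ (fun (f : Fin m → Fin H) (g : Fin m → Fin m) => f ∘ g) h1
      (congrArg (fun σ : Equiv.Perm (Fin m) => (σ : Fin m → Fin m)) h2)

/-- The even-moment bound for the random model:
`E[(Re Z_H)^{2r} (Im Z_H)^{2s}] ≤ (r+s)! H^{r+s}`. -/
theorem random_model_even_moment_bound
    {Ω : Type*} [MeasurableSpace Ω] (μ : Measure Ω) [IsProbabilityMeasure μ]
    (H : ℕ) (hH : 1 ≤ H)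
    (X : Fin H → Ω → ℂ)
    (hmeas : ∀ j, Measurable (X j))
    (hindep : iIndepFun X μ)
    (hunif : ∀ j, Measure.map (X j) μ = uniformCircle)
    (r s : ℕ) :
    ∫ ω, ((∑ j, X j ω).re ^ (2 * r) * (∑ j, X j ω).im ^ (2 * s)) ∂μ
      ≤ ((r + s).factorial : ℝ) * (H : ℝ) ^ (r + s) := by
  classical
  set m : ℕ := r + s with hm
  set Z : Ω → ℂ := fun ω => ∑ j, X j ω with hZdef
  have hZm : Measurable Z := Finset.measurable_sum univ (fun j _ => hmeas j)
  -- a.e. unit modulus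
  have hae : ∀ᵐ ω ∂μ, ∀ l, ‖X l ω‖ = 1 := by
    rw [ae_all_iff]
    intro l
    have h1 : ∀ᵐ z ∂(Measure.map (X l) μ), ‖z‖ = 1 := by
      rw [hunif l]; exact uniformCircle_abs_ae
    exact (ae_map_iff (hmeas l).aemeasurable
      (continuous_norm.measurable (measurableSet_singleton 1))).mp h1
  -- the pair terms
  set G : ((Fin m → Fin H) × (Fin m → Fin H)) → Ω → ℂ :=
    fun p ω => (∏ i, X (p.1 i) ω) * ∏ i, (starRingEnd ℂ) (X (p.2 i) ω) with hGdef
  have hGmeas : ∀ p, Measurable (G p) := by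
    intro p
    exact (Finset.measurable_prod _ fun i _ => hmeas (p.1 i)).mul
      (Finset.measurable_prod _ fun i _ => continuous_star.measurable.comp (hmeas (p.2 i)))
  have hGint : ∀ p, Integrable (G p) μ := by
    intro p
    refine Integrable.mono' (integrable_const 1) (hGmeas p).aestronglyMeasurable ?_
    filter_upwards [hae] with ω hω
    rw [hGdef]
    simp only [norm_mul, norm_prod]
    have e1 : ∀ i : Fin m, ‖X (p.1 i) ω‖ = 1 := fun i => by
      rw [hω (p.1 i)]
    have e2 : ∀ i : Fin m, ‖(starRingEnd ℂ) (X (p.2 i) ω)‖ = 1 := fun i => by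
      rw [RCLike.norm_conj, hω (p.2 i)]
    rw [Finset.prod_congr rfl fun i _ => e1 i, Finset.prod_congr rfl fun i _ => e2 i]
    simp
  -- value of each pair term
  have hGval : ∀ p, ∫ ω, G p ω ∂μ =
      if (∀ l, (univ.filter fun i => p.1 i = l).card = (univ.filter fun i => p.2 i = l).card)
      then (1:ℂ) else 0 := by
    intro p
    set a : Fin H → ℕ := fun l => (univ.filter fun i => p.1 i = l).card with hadef
    set b : Fin H → ℕ := fun l => (univ.filter fun i => p.2 i = l).card with hbdef
    have hfib : ∀ ω, G p ω = ∏ l, ((X l ω) ^ a l * (starRingEnd ℂ) (X l ω) ^ b l) := by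
      intro ω
      simp only [hGdef]
      rw [Finset.prod_mul_distrib]
      congr 1
      · rw [← Finset.prod_fiberwise univ (fun i => p.1 i) (fun i => X (p.1 i) ω)]
        refine Finset.prod_congr rfl fun l _ => ?_
        rw [Finset.prod_congr rfl (fun i hi => by rw [(mem_filter.mp hi).2] :
          ∀ i ∈ univ.filter fun i => p.1 i = l, X (p.1 i) ω = X l ω), Finset.prod_const]
      · rw [← Finset.prod_fiberwise univ (fun i => p.2 i)
          (fun i => (starRingEnd ℂ) (X (p.2 i) ω))]
        refine Finset.prod_congr rfl fun l _ => ?_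
        rw [Finset.prod_congr rfl (fun i hi => by rw [(mem_filter.mp hi).2] :
          ∀ i ∈ univ.filter fun i => p.2 i = l,
            (starRingEnd ℂ) (X (p.2 i) ω) = (starRingEnd ℂ) (X l ω)), Finset.prod_const]
    calc ∫ ω, G p ω ∂μ
        = ∫ ω, ∏ l, ((X l ω) ^ a l * (starRingEnd ℂ) (X l ω) ^ b l) ∂μ :=
          integral_congr_ae (ae_of_all _ hfib)
      _ = ∏ l, ∫ z, z ^ a l * (starRingEnd ℂ) z ^ b l ∂uniformCircle := by
          exact integral_prod_comp μ X hmeas hindep hunif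
            (fun l z => z ^ a l * (starRingEnd ℂ) z ^ b l)
            (fun l => (measurable_id.pow_const (a l)).mul
              ((continuous_star.measurable :
                Measurable (fun z : ℂ => (starRingEnd ℂ) z)).pow_const (b l)))
      _ = ∏ l, if a l = b l then (1:ℂ) else 0 := by
          exact Finset.prod_congr rfl fun l _ => uniformCircle_moment (a l) (b l)
      _ = if (∀ l, a l = b l) then (1:ℂ) else 0 := by
          by_cases hall : ∀ l, a l = b l
          · rw [if_pos hall]
            exact Finset.prod_eq_one fun l _ => if_pos (hall l)
          · rw [if_neg hall]
            push_neg at hall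
            obtain ⟨l0, hl0⟩ := hall
            exact Finset.prod_eq_zero (mem_univ l0) (if_neg hl0)
  -- the sum identity
  have hsum : ∀ ω, (∑ p : (Fin m → Fin H) × (Fin m → Fin H), G p ω)
      = (Z ω) ^ m * (starRingEnd ℂ) (Z ω) ^ m := by
    intro ω
    have hz : (Z ω) ^ m = ∑ p : Fin m → Fin H, ∏ i, X (p i) ω := by
      rw [hZdef]
      rw [Finset.sum_pow' univ (fun j => X j ω) m, Fintype.piFinset_univ]
    have hzc : ((starRingEnd ℂ) (Z ω)) ^ m
        = ∑ p : Fin m → Fin H, ∏ i, (starRingEnd ℂ) (X (p i) ω) := by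
      rw [hZdef]
      simp only [map_sum]
      rw [Finset.sum_pow' univ (fun j => (starRingEnd ℂ) (X j ω)) m, Fintype.piFinset_univ]
    rw [hz, hzc, Finset.sum_mul_sum, Fintype.sum_prod_type]
  -- normSq identity
  have hns : ∀ ω, (Complex.normSq (Z ω)) ^ m
      = (∑ p : (Fin m → Fin H) × (Fin m → Fin H), G p ω).re := by
    intro ω
    rw [hsum ω, ← mul_pow, Complex.mul_conj, ← Complex.ofReal_pow, Complex.ofReal_re]
  -- integral of normSq^m
  have hIsum : Integrable (fun ω => ∑ p : (Fin m → Fin H) × (Fin m → Fin H), G p ω) μ :=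
    integrable_finset_sum _ fun p _ => hGint p
  have hval : ∫ ω, (Complex.normSq (Z ω)) ^ m ∂μ
      = (((univ : Finset ((Fin m → Fin H) × (Fin m → Fin H))).filter fun p =>
          ∀ l, (univ.filter fun i => p.1 i = l).card
            = (univ.filter fun i => p.2 i = l).card).card : ℝ) := by
    calc ∫ ω, (Complex.normSq (Z ω)) ^ m ∂μ
        = ∫ ω, (∑ p : (Fin m → Fin H) × (Fin m → Fin H), G p ω).re ∂μ :=
          integral_congr_ae (ae_of_all _ hns)
      _ = (∫ ω, (∑ p : (Fin m → Fin H) × (Fin m → Fin H), G p ω) ∂μ).re := by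
          rw [← RCLike.re_eq_complex_re]
          exact integral_re hIsum
      _ = (∑ p : (Fin m → Fin H) × (Fin m → Fin H), ∫ ω, G p ω ∂μ).re := by
          rw [integral_finset_sum _ fun p _ => hGint p]
      _ = ∑ p : (Fin m → Fin H) × (Fin m → Fin H),
            (if (∀ l, (univ.filter fun i => p.1 i = l).card
              = (univ.filter fun i => p.2 i = l).card) then (1:ℝ) else 0) := by
          rw [Complex.re_sum]
          refine Finset.sum_congr rfl fun p _ => ?_
          rw [hGval p]
          split <;> simp
      _ = _ := by rw [Finset.sum_boole]
  -- pointwise inequality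
  have hptwise : ∀ ω, (Z ω).re ^ (2 * r) * (Z ω).im ^ (2 * s)
      ≤ (Complex.normSq (Z ω)) ^ m := by
    intro ω
    have h1 : (Z ω).re ^ 2 ≤ Complex.normSq (Z ω) := by
      rw [Complex.normSq_apply]; nlinarith [sq_nonneg (Z ω).im, sq_nonneg (Z ω).re]
    have h2 : (Z ω).im ^ 2 ≤ Complex.normSq (Z ω) := by
      rw [Complex.normSq_apply]; nlinarith [sq_nonneg (Z ω).im, sq_nonneg (Z ω).re]
    calc (Z ω).re ^ (2 * r) * (Z ω).im ^ (2 * s)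
        = ((Z ω).re ^ 2) ^ r * ((Z ω).im ^ 2) ^ s := by rw [← pow_mul, ← pow_mul]
      _ ≤ (Complex.normSq (Z ω)) ^ r * (Complex.normSq (Z ω)) ^ s := by
          exact mul_le_mul (pow_le_pow_left₀ (sq_nonneg _) h1 r)
            (pow_le_pow_left₀ (sq_nonneg _) h2 s) (pow_nonneg (sq_nonneg _) s)
            (pow_nonneg (Complex.normSq_nonneg _) r)
      _ = (Complex.normSq (Z ω)) ^ m := by rw [← pow_add, hm]
  -- integrability of both sides
  have hbound : ∀ᵐ ω ∂μ, Complex.normSq (Z ω) ≤ ((H:ℝ)) ^ 2 := by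
    filter_upwards [hae] with ω hω
    have habs : ‖Z ω‖ ≤ (H : ℝ) := by
      rw [hZdef]
      calc ‖∑ j, X j ω‖ ≤ ∑ j, ‖X j ω‖ := by
            simpa using norm_sum_le univ (fun j => X j ω)
        _ = (H : ℝ) := by simp [hω]
      
    rw [← Complex.sq_norm]
    exact pow_le_pow_left₀ (norm_nonneg _) habs 2
  have hint2 : Integrable (fun ω => (Complex.normSq (Z ω)) ^ m) μ := by
    refine Integrable.mono' (integrable_const ((((H:ℝ)) ^ 2) ^ m))
      (((Complex.continuous_normSq.measurable).comp hZm).pow_const m).aestronglyMeasurable ?_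
    filter_upwards [hbound] with ω hω
    rw [Real.norm_eq_abs, _root_.abs_of_nonneg (pow_nonneg (Complex.normSq_nonneg _) m)]
    exact pow_le_pow_left₀ (Complex.normSq_nonneg _) hω m
  have hint1 : Integrable (fun ω => (Z ω).re ^ (2 * r) * (Z ω).im ^ (2 * s)) μ := by
    refine Integrable.mono' (integrable_const ((((H:ℝ)) ^ 2) ^ m))
      (((Complex.measurable_re.comp hZm).pow_const _).mul
        ((Complex.measurable_im.comp hZm).pow_const _)).aestronglyMeasurable ?_
    filter_upwards [hbound] with ω hω
    have hnn : 0 ≤ (Z ω).re ^ (2 * r) * (Z ω).im ^ (2 * s) := by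
      apply mul_nonneg <;>
        · rw [pow_mul]; exact pow_nonneg (sq_nonneg _) _
    rw [Real.norm_eq_abs, _root_.abs_of_nonneg hnn]
    exact le_trans (hptwise ω)
      (le_trans (pow_le_pow_left₀ (Complex.normSq_nonneg _) hω m) le_rfl)
  -- conclusion
  have hmono : ∫ ω, ((Z ω).re ^ (2 * r) * (Z ω).im ^ (2 * s)) ∂μ
      ≤ ∫ ω, (Complex.normSq (Z ω)) ^ m ∂μ :=
    integral_mono hint1 hint2 hptwise
  have hcount := card_pairs_le m H
  calc ∫ ω, ((∑ j, X j ω).re ^ (2 * r) * (∑ j, X j ω).im ^ (2 * s)) ∂μ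
      = ∫ ω, ((Z ω).re ^ (2 * r) * (Z ω).im ^ (2 * s)) ∂μ := rfl
    _ ≤ ∫ ω, (Complex.normSq (Z ω)) ^ m ∂μ := hmono
    _ = _ := hval
    _ ≤ ((m.factorial * H ^ m : ℕ) : ℝ) := by exact_mod_cast hcount
    _ = ((r + s).factorial : ℝ) * (H : ℝ) ^ (r + s) := by push_cast [hm]; ring
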